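/- arXiv:2204.11603 — 3 statements merged into one kernel-verified Lean document; each statement's English description precedes it below -/
import Mathlib

section
/- Let $\eta$ be a (signed, locally finite) measure on $\mathbb{C}$ with $0 \notin \operatorname{supp}\eta$, and suppose $S := \sup_{0 \le r < R < +\infty} \ell_\eta^{\vdash}(r,R) < +\infty$. Then there exists a positive measure $\alpha$ supported on $\mathbb{R}^+ \setminus \{0\}$ such that $\sup_{0 \le r < R < +\infty} |\ell_{\eta+\alpha}^{\vdash}(r,R)| \le 2S$. Moreover, if $\eta$ has finite upper density, then $\alpha$ can be chosen of finite upper density. -/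
open MeasureTheory Filter

/-- The annulus `{z : r < |z| ≤ R}` in `ℂ`. -/
def annulus (r R : ℝ) : Set ℂ := {z : ℂ | r < ‖z‖ ∧ ‖z‖ ≤ R}

/-- Right logarithmic function of intervals: `∫_{r<|z|≤R} Re⁺(1/z) dν`. -/
noncomputable def ellP (ν : Measure ℂ) (r R : ℝ) : ℝ :=
  ∫ z in annulus r R, max (1 / z).re 0 ∂ν

/-- Left logarithmic function of intervals: `∫_{r<|z|≤R} Re⁻(1/z) dν`. -/
noncomputable def ellM (ν : Measure ℂ) (r R : ℝ) : ℝ :=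
  ∫ z in annulus r R, max (-(1 / z).re) 0 ∂ν

/-- The logarithmic submeasure `ℓ_ν(r,R)`. -/
noncomputable def ell (ν : Measure ℂ) (r R : ℝ) : ℝ := max (ellP ν r R) (ellM ν r R)

/-- Radial counting function `ν^rad(t) = ν(t·𝔻̄)`. -/
noncomputable def rad (ν : Measure ℂ) (t : ℝ) : ℝ := (ν (Metric.closedBall 0 t)).toReal

/-- Finite upper density: `limsup_{t→∞} ν^rad(t)/t < +∞`. -/
def FiniteUpperDensity (ν : Measure ℂ) : Prop := ∃ C : ℝ, ∀ᶠ t in atTop, rad ν t ≤ C * t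

/-- Right logarithmic function of the signed measure `η = ηp - ηm`. -/
noncomputable def ellPdiff (ηp ηm : Measure ℂ) (r R : ℝ) : ℝ :=
  ellP ηp r R - ellP ηm r R

section Aux

open Set
open scoped ENNReal NNReal

lemma measurableSet_annulus (r R : ℝ) : MeasurableSet (annulus r R) := by
  have : annulus r R = (fun z : ℂ => ‖z‖) ⁻¹' (Ioc r R) := rfl
  rw [this]; exact measurable_norm measurableSet_Ioc

lemma phi_meas : Measurable fun z : ℂ => max (1/z).re 0 :=
  ((measurable_const.div measurable_id).re).max measurable_const

lemma phi_nonneg (z : ℂ) : 0 ≤ max (1/z).re 0 := le_max_right _ _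

lemma phi_le {δ : ℝ} (hδ : 0 < δ) {z : ℂ} (hz : δ ≤ ‖z‖) : max (1/z).re 0 ≤ 1/δ := by
  have h1 : (1/z).re ≤ ‖1/z‖ := Complex.re_le_norm _
  have h2 : ‖1/z‖ ≤ 1/δ := by
    rw [norm_div, norm_one]
    exact one_div_le_one_div_of_le hδ hz
  exact max_le (h1.trans h2) (by positivity)

lemma annulus_subset_closedBall (r R : ℝ) : annulus r R ⊆ Metric.closedBall 0 R := by
  intro z hz
  simpa [Metric.mem_closedBall, Complex.dist_eq] using hz.2

lemma annulus_subset_ball {r R ε : ℝ} (h : R < ε) : annulus r R ⊆ Metric.ball 0 ε := by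
  intro z hz
  simp only [Metric.mem_ball, Complex.dist_eq, sub_zero]
  calc ‖z‖ = ‖z‖ := rfl
    _ ≤ R := hz.2
    _ < ε := h

lemma annulus_fin (ν : Measure ℂ) [IsFiniteMeasureOnCompacts ν] (r R : ℝ) :
    ν (annulus r R) < ⊤ :=
  lt_of_le_of_lt (measure_mono (annulus_subset_closedBall r R))
    (isCompact_closedBall 0 R).measure_lt_top

lemma integrableOn_phi (ν : Measure ℂ) [IsFiniteMeasureOnCompacts ν] {δ : ℝ} (hδ : 0 < δ)
    (hν : ν (Metric.ball 0 δ) = 0) (r R : ℝ) :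
    IntegrableOn (fun z => max (1/z).re 0) (annulus r R) ν := by
  have : IsFiniteMeasure (ν.restrict (annulus r R)) := by
    constructor
    rw [Measure.restrict_apply_univ]
    exact annulus_fin ν r R
  refine Integrable.mono' (integrable_const (1/δ)) phi_meas.aestronglyMeasurable ?_
  have hball : (ν.restrict (annulus r R)) (Metric.ball 0 δ) = 0 :=
    le_antisymm (le_trans (Measure.restrict_le_self _) hν.le) (by simp)
  filter_upwards [MeasureTheory.measure_eq_zero_iff_ae_notMem.mp hball] with z hz
  have hz' : δ ≤ ‖z‖ := by
    by_contra h
    exact hz (by simpa [Metric.mem_ball, Complex.dist_eq] using lt_of_not_ge h)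
  rw [Real.norm_of_nonneg (phi_nonneg z)]
  exact phi_le hδ hz'

lemma ellP_nonneg (ν : Measure ℂ) (r R : ℝ) : 0 ≤ ellP ν r R :=
  integral_nonneg phi_nonneg

lemma ellP_of_null {ν : Measure ℂ} {r R : ℝ} (h : ν (annulus r R) = 0) : ellP ν r R = 0 := by
  unfold ellP
  rw [Measure.restrict_eq_zero.mpr h, integral_zero_measure]

lemma ellP_empty {ν : Measure ℂ} {r R : ℝ} (h : R ≤ r) : ellP ν r R = 0 := by
  apply ellP_of_null
  convert measure_empty
  · ext z; simp only [annulus, mem_setOf_eq, mem_empty_iff_false, iff_false]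
    rintro ⟨h1, h2⟩; exact absurd (h1.trans_le h2) (not_lt.2 h)
  · infer_instance

lemma annulus_union {r s R : ℝ} (hrs : r ≤ s) (hsR : s ≤ R) :
    annulus r s ∪ annulus s R = annulus r R := by
  ext z
  simp only [annulus, mem_union, mem_setOf_eq]
  constructor
  · rintro (⟨h1, h2⟩ | ⟨h1, h2⟩)
    · exact ⟨h1, h2.trans hsR⟩
    · exact ⟨lt_of_le_of_lt hrs h1, h2⟩
  · rintro ⟨h1, h2⟩
    rcases le_or_gt ‖z‖ s with h | h
    · exact Or.inl ⟨h1, h⟩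
    · exact Or.inr ⟨h, h2⟩

lemma ellP_split (ν : Measure ℂ) [IsFiniteMeasureOnCompacts ν] {δ : ℝ} (hδ : 0 < δ)
    (hν : ν (Metric.ball 0 δ) = 0) {r s R : ℝ} (hrs : r ≤ s) (hsR : s ≤ R) :
    ellP ν r R = ellP ν r s + ellP ν s R := by
  unfold ellP
  rw [← annulus_union hrs hsR, setIntegral_union ?_ (measurableSet_annulus s R)
    (integrableOn_phi ν hδ hν r s) (integrableOn_phi ν hδ hν s R)]
  · rw [Set.disjoint_left]
    rintro z ⟨_, h2⟩ ⟨h3, _⟩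
    exact absurd (h2.trans_lt h3) (lt_irrefl _)

lemma ellP_add_measure (ν₁ ν₂ : Measure ℂ) [IsFiniteMeasureOnCompacts ν₁]
    [IsFiniteMeasureOnCompacts ν₂] {δ₁ δ₂ : ℝ} (h₁ : 0 < δ₁) (h₂ : 0 < δ₂)
    (hν₁ : ν₁ (Metric.ball 0 δ₁) = 0) (hν₂ : ν₂ (Metric.ball 0 δ₂) = 0) (r R : ℝ) :
    ellP (ν₁ + ν₂) r R = ellP ν₁ r R + ellP ν₂ r R := by
  unfold ellP
  rw [Measure.restrict_add, integral_add_measure (integrableOn_phi ν₁ h₁ hν₁ r R)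
    (integrableOn_phi ν₂ h₂ hν₂ r R)]

lemma ellP_le (ν : Measure ℂ) [IsFiniteMeasureOnCompacts ν] {δ : ℝ} (hδ : 0 < δ)
    (hν : ν (Metric.ball 0 δ) = 0) {r : ℝ} (hr : 0 < r) (R : ℝ) :
    ellP ν r R ≤ (ν (annulus r R)).toReal * (1/r) := by
  unfold ellP
  have h := setIntegral_mono_on (integrableOn_phi ν hδ hν r R)
    (integrableOn_const (annulus_fin ν r R).ne)
    (measurableSet_annulus r R) (fun z hz => phi_le hr hz.1.le)
  calc ∫ z in annulus r R, max (1/z).re 0 ∂ν ≤ ∫ _ in annulus r R, (1/r) ∂ν := h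
    _ = (ν (annulus r R)).toReal * (1/r) := by rw [setIntegral_const, smul_eq_mul, measureReal_def]

lemma emb_ofReal : MeasurableEmbedding (Complex.ofReal) :=
  Complex.isometry_ofReal.isClosedEmbedding.measurableEmbedding

/-- The measure on the positive real axis induced by a Stieltjes function, with density `x`. -/
noncomputable def posMeasure (sf : StieltjesFunction ℝ) : Measure ℂ :=
  Measure.map Complex.ofReal (sf.measure.withDensity (fun x => ((Real.toNNReal x : ℝ≥0) : ℝ≥0∞)))

lemma posMeasure_apply (sf : StieltjesFunction ℝ) {E : Set ℂ} (hE : MeasurableSet E) :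
    posMeasure sf E = ∫⁻ x in Complex.ofReal ⁻¹' E, ENNReal.ofReal x ∂sf.measure := by
  rw [posMeasure, emb_ofReal.map_apply,
    withDensity_apply _ (emb_ofReal.measurable hE)]
  simp [ENNReal.ofReal]

lemma lintegral_Iic_zero (sf : StieltjesFunction ℝ) :
    ∫⁻ x in Iic (0:ℝ), ENNReal.ofReal x ∂sf.measure = 0 := by
  have h : ∀ᵐ x ∂(sf.measure.restrict (Iic (0:ℝ))), ENNReal.ofReal x = 0 := by
    filter_upwards [ae_restrict_mem measurableSet_Iic] with x hx
    exact ENNReal.ofReal_eq_zero.2 hx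
  rw [lintegral_congr_ae h, lintegral_zero]

lemma preimage_closedBall (t : ℝ) :
    Complex.ofReal ⁻¹' (Metric.closedBall 0 t) = Icc (-t) t := by
  ext x
  simp [Metric.mem_closedBall, Complex.dist_eq, abs_le]

lemma posMeasure_closedBall_le (sf : StieltjesFunction ℝ) {t u : ℝ} (htu : t ≤ u) :
    posMeasure sf (Metric.closedBall 0 t)
      ≤ ∫⁻ x in Ioc (0:ℝ) u, ENNReal.ofReal x ∂sf.measure := by
  rw [posMeasure_apply sf measurableSet_closedBall, preimage_closedBall]
  have hsub : Icc (-t) t ⊆ Iic 0 ∪ Ioc 0 u := by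
    intro x hx
    rcases le_or_gt x 0 with h | h
    · exact Or.inl h
    · exact Or.inr ⟨h, hx.2.trans htu⟩
  calc ∫⁻ x in Icc (-t) t, ENNReal.ofReal x ∂sf.measure
      ≤ ∫⁻ x in Iic 0 ∪ Ioc 0 u, ENNReal.ofReal x ∂sf.measure := lintegral_mono_set hsub
    _ ≤ (∫⁻ x in Iic 0, ENNReal.ofReal x ∂sf.measure)
        + ∫⁻ x in Ioc 0 u, ENNReal.ofReal x ∂sf.measure := lintegral_union_le _ _ _
    _ = ∫⁻ x in Ioc 0 u, ENNReal.ofReal x ∂sf.measure := by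
        rw [lintegral_Iic_zero, zero_add]

lemma lintegral_Ioc_le (sf : StieltjesFunction ℝ) {a b : ℝ} (hb : 0 ≤ b) :
    ∫⁻ x in Ioc a b, ENNReal.ofReal x ∂sf.measure
      ≤ ENNReal.ofReal b * ENNReal.ofReal (sf b - sf a) := by
  calc ∫⁻ x in Ioc a b, ENNReal.ofReal x ∂sf.measure
      ≤ ∫⁻ _ in Ioc a b, ENNReal.ofReal b ∂sf.measure :=
        setLIntegral_mono measurable_const (fun x hx => ENNReal.ofReal_le_ofReal hx.2)
    _ = ENNReal.ofReal b * sf.measure (Ioc a b) := setLIntegral_const _ _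
    _ = ENNReal.ofReal b * ENNReal.ofReal (sf b - sf a) := by rw [sf.measure_Ioc]

instance posMeasure_finite (sf : StieltjesFunction ℝ) :
    IsFiniteMeasureOnCompacts (posMeasure sf) := by
  constructor
  intro K hK
  obtain ⟨t, ht⟩ := hK.isBounded.subset_closedBall 0
  calc posMeasure sf K ≤ posMeasure sf (Metric.closedBall 0 t) := measure_mono ht
    _ ≤ ∫⁻ x in Ioc (0:ℝ) (max t 0), ENNReal.ofReal x ∂sf.measure :=
        posMeasure_closedBall_le sf (le_max_left _ _)
    _ ≤ ENNReal.ofReal (max t 0) * ENNReal.ofReal (sf (max t 0) - sf 0) :=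
        lintegral_Ioc_le sf (le_max_right _ _)
    _ < ⊤ := ENNReal.mul_lt_top ENNReal.ofReal_lt_top ENNReal.ofReal_lt_top

lemma posMeasure_support (sf : StieltjesFunction ℝ) :
    posMeasure sf {z : ℂ | ¬ (0 < z.re ∧ z.im = 0)} = 0 := by
  have hE : MeasurableSet {z : ℂ | ¬ (0 < z.re ∧ z.im = 0)} := by
    apply MeasurableSet.compl
    exact (measurableSet_lt measurable_const Complex.measurable_re).inter
      (Complex.measurable_im (measurableSet_singleton 0))
  rw [posMeasure_apply sf hE]
  have : Complex.ofReal ⁻¹' {z : ℂ | ¬ (0 < z.re ∧ z.im = 0)} = Iic 0 := by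
    ext x
    simp [Complex.ofReal_re, Complex.ofReal_im, not_lt]
  rw [this, lintegral_Iic_zero]

lemma preimage_ball (δ : ℝ) : Complex.ofReal ⁻¹' (Metric.ball 0 δ) = Ioo (-δ) δ := by
  ext x
  simp [Metric.mem_ball, Complex.dist_eq, abs_lt]

lemma posMeasure_ball (sf : StieltjesFunction ℝ) {δ : ℝ}
    (h : sf.measure (Ioc (-δ) δ) = 0) : posMeasure sf (Metric.ball 0 δ) = 0 := by
  rw [posMeasure_apply sf measurableSet_ball, preimage_ball]
  refine le_antisymm ?_ (by simp)
  calc ∫⁻ x in Ioo (-δ) δ, ENNReal.ofReal x ∂sf.measure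
      ≤ ∫⁻ x in Ioc (-δ) δ, ENNReal.ofReal x ∂sf.measure := lintegral_mono_set Ioo_subset_Ioc_self
    _ = 0 := by rw [Measure.restrict_eq_zero.mpr h, lintegral_zero_measure]

lemma posMeasure_ellP (sf : StieltjesFunction ℝ) {r R : ℝ} (hr : 0 ≤ r) (hrR : r ≤ R) :
    ellP (posMeasure sf) r R = sf R - sf r := by
  have hT : MeasurableSet (Complex.ofReal ⁻¹' annulus r R) :=
    emb_ofReal.measurable (measurableSet_annulus r R)
  unfold ellP posMeasure
  rw [emb_ofReal.setIntegral_map]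
  rw [restrict_withDensity hT]
  rw [integral_withDensity_eq_integral_smul measurable_real_toNNReal]
  have heq : EqOn (fun x : ℝ => Real.toNNReal x • max (1 / (x:ℂ)).re 0)
      ((Ioc r R).indicator (fun _ => (1:ℝ))) (Complex.ofReal ⁻¹' annulus r R) := by
    intro x hx
    simp only [annulus, mem_preimage, mem_setOf_eq, Complex.norm_real, Real.norm_eq_abs] at hx
    by_cases hx0 : 0 < x
    · have hmem : x ∈ Ioc r R := by
        rw [abs_of_pos hx0] at hx
        exact ⟨hx.1, hx.2⟩
      have h1 : (1 / (x:ℂ)).re = 1 / x := by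
        rw [← Complex.ofReal_one, ← Complex.ofReal_div, Complex.ofReal_re]
      simp only [indicator_of_mem hmem]
      rw [h1, max_eq_left (by positivity), NNReal.smul_def, Real.coe_toNNReal _ hx0.le]
      rw [smul_eq_mul]; field_simp
    · push_neg at hx0
      have hmem : x ∉ Ioc r R := fun h => absurd (hr.trans_lt h.1) (not_lt.2 hx0)
      simp only [indicator_of_notMem hmem, Real.toNNReal_of_nonpos hx0, zero_smul]
  rw [setIntegral_congr_fun hT heq]
  rw [setIntegral_indicator measurableSet_Ioc]
  have hinter : Complex.ofReal ⁻¹' annulus r R ∩ Ioc r R = Ioc r R := by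
    refine inter_eq_self_of_subset_right ?_
    intro x hx
    simp only [annulus, mem_preimage, mem_setOf_eq, Complex.norm_real, Real.norm_eq_abs]
    rw [abs_of_pos (hr.trans_lt hx.1)]
    exact ⟨hx.1, hx.2⟩
  rw [hinter, setIntegral_const, measureReal_def, sf.measure_Ioc, smul_eq_mul, mul_one,
    ENNReal.toReal_ofReal (sub_nonneg.2 (sf.mono hrR))]

lemma exists_dyadic {r₀ t : ℝ} (hr₀ : 0 < r₀) (ht : r₀ ≤ t) :
    ∃ n : ℕ, t ≤ r₀ * 2 ^ n ∧ r₀ * 2 ^ n ≤ 2 * t := by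
  have hex : ∃ n : ℕ, t ≤ r₀ * 2 ^ n := by
    obtain ⟨n, hn⟩ := pow_unbounded_of_one_lt (t / r₀) one_lt_two
    exact ⟨n, by rw [div_lt_iff₀ hr₀] at hn; nlinarith⟩
  classical
  refine ⟨Nat.find hex, Nat.find_spec hex, ?_⟩
  rcases Nat.eq_zero_or_pos (Nat.find hex) with h | h
  · rw [h]; simp only [pow_zero, mul_one]; linarith
  · obtain ⟨m, hm⟩ := Nat.exists_eq_succ_of_ne_zero h.ne'
    have := Nat.find_min hex (m := m) (by omega)
    push_neg at this
    rw [hm, pow_succ]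
    nlinarith

lemma dyadic_bound (sf : StieltjesFunction ℝ) {r₀ K : ℝ} (hr₀ : 0 < r₀) (hK : 0 ≤ K)
    (hinc : ∀ u, r₀ ≤ u → sf (2*u) - sf u ≤ K) (n : ℕ) :
    ∫⁻ x in Ioc (0:ℝ) (r₀ * 2^n), ENNReal.ofReal x ∂sf.measure
      ≤ ENNReal.ofReal (r₀ * (sf r₀ - sf 0) + 2*K*(r₀*2^n)) := by
  induction n with
  | zero =>
    simp only [pow_zero, mul_one]
    calc ∫⁻ x in Ioc (0:ℝ) r₀, ENNReal.ofReal x ∂sf.measure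
        ≤ ENNReal.ofReal r₀ * ENNReal.ofReal (sf r₀ - sf 0) := lintegral_Ioc_le sf hr₀.le
      _ = ENNReal.ofReal (r₀ * (sf r₀ - sf 0)) := (ENNReal.ofReal_mul hr₀.le).symm
      _ ≤ ENNReal.ofReal (r₀ * (sf r₀ - sf 0) + 2*K*r₀) := by
          apply ENNReal.ofReal_le_ofReal; nlinarith
  | succ n ih =>
    have h1 : (0:ℝ) ≤ r₀ * 2^n := by positivity
    have h2 : r₀ * 2^n ≤ r₀ * 2^(n+1) := by
      have : (2:ℝ)^n ≤ 2^(n+1) := by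
        apply pow_le_pow_right₀ one_le_two (Nat.le_succ n)
      nlinarith
    have hsplit : Ioc (0:ℝ) (r₀*2^(n+1)) = Ioc (0:ℝ) (r₀*2^n) ∪ Ioc (r₀*2^n) (r₀*2^(n+1)) :=
      (Ioc_union_Ioc_eq_Ioc h1 h2).symm
    have hsfK : sf (r₀*2^(n+1)) - sf (r₀*2^n) ≤ K := by
      have h := hinc (r₀*2^n) (by nlinarith [one_le_pow₀ (one_le_two : (1:ℝ) ≤ 2) (n := n)])
      have he : 2*(r₀*2^n) = r₀*2^(n+1) := by ring
      rwa [he] at h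
    calc ∫⁻ x in Ioc (0:ℝ) (r₀*2^(n+1)), ENNReal.ofReal x ∂sf.measure
        ≤ (∫⁻ x in Ioc (0:ℝ) (r₀*2^n), ENNReal.ofReal x ∂sf.measure)
          + ∫⁻ x in Ioc (r₀*2^n) (r₀*2^(n+1)), ENNReal.ofReal x ∂sf.measure := by
          rw [hsplit]; exact lintegral_union_le _ _ _
      _ ≤ ENNReal.ofReal (r₀ * (sf r₀ - sf 0) + 2*K*(r₀*2^n))
          + ENNReal.ofReal (r₀*2^(n+1)) * ENNReal.ofReal (sf (r₀*2^(n+1)) - sf (r₀*2^n)) :=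
          add_le_add ih (lintegral_Ioc_le sf (by positivity))
      _ ≤ ENNReal.ofReal (r₀ * (sf r₀ - sf 0) + 2*K*(r₀*2^n))
          + ENNReal.ofReal (r₀*2^(n+1)) * ENNReal.ofReal K := by
          exact add_le_add le_rfl (mul_le_mul' le_rfl (ENNReal.ofReal_le_ofReal hsfK))
      _ = ENNReal.ofReal (r₀ * (sf r₀ - sf 0) + 2*K*(r₀*2^n))
          + ENNReal.ofReal ((r₀*2^(n+1)) * K) := by
          rw [← ENNReal.ofReal_mul (by positivity : (0:ℝ) ≤ r₀*2^(n+1))]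
      _ ≤ ENNReal.ofReal (r₀ * (sf r₀ - sf 0) + 2*K*(r₀*2^(n+1))) := by
          rw [← ENNReal.ofReal_add (by nlinarith [sub_nonneg.2 (sf.mono hr₀.le)]) (by positivity)]
          apply ENNReal.ofReal_le_ofReal
          ring_nf
          nlinarith

end Aux

/-- For a locally finite signed measure `η = ηp - ηm` with
`0 ∉ supp η` and `ℓ_η^⊢(r,R) ≤ S` for all `0 ≤ r < R`, there is a positive
measure `α` supported on `ℝ⁺ \ {0}` with `|ℓ_{η+α}^⊢(r,R)| ≤ 2S` for all
`0 ≤ r < R`; moreover `α` has finite upper density whenever `η` does. -/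
theorem stmt6 (ηp ηm : Measure ℂ)
    [IsFiniteMeasureOnCompacts ηp] [IsFiniteMeasureOnCompacts ηm]
    (h0 : ∃ ε > (0 : ℝ), ηp (Metric.ball 0 ε) = 0 ∧ ηm (Metric.ball 0 ε) = 0)
    (S : ℝ) (hS : ∀ r R : ℝ, 0 ≤ r → r < R → ellPdiff ηp ηm r R ≤ S) :
    ∃ α : Measure ℂ, IsFiniteMeasureOnCompacts α ∧
      α {z : ℂ | ¬ (0 < z.re ∧ z.im = 0)} = 0 ∧
      (∀ r R : ℝ, 0 ≤ r → r < R → |ellPdiff (ηp + α) ηm r R| ≤ 2 * S) ∧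
      (FiniteUpperDensity ηp → FiniteUpperDensity ηm → FiniteUpperDensity α) := by
  classical
  open Set in
  obtain ⟨ε, hε, hp0, hm0⟩ := h0
  have hnull : ∀ (ν : Measure ℂ), ν (Metric.ball 0 ε) = 0 → ∀ r R : ℝ, R < ε → ellP ν r R = 0 :=
    fun ν hν r R hR => ellP_of_null (measure_mono_null (annulus_subset_ball hR) hν)
  set F : ℝ → ℝ := fun t => ellPdiff ηp ηm 0 t with hFdef
  have hFeps : ∀ t : ℝ, t < ε → F t = 0 := by
    intro t ht
    simp only [hFdef, ellPdiff, hnull ηp hp0 0 t ht, hnull ηm hm0 0 t ht, sub_zero]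
  have hS0 : 0 ≤ S := by
    have h1 := hS 0 (ε/2) le_rfl (by linarith)
    have h2 : F (ε/2) = 0 := hFeps _ (by linarith)
    simp only [hFdef] at h2
    linarith
  have hFadd : ∀ t s : ℝ, 0 ≤ t → t ≤ s → F s = F t + ellPdiff ηp ηm t s := by
    intro t s ht hts
    simp only [hFdef, ellPdiff]
    rw [ellP_split ηp hε hp0 ht hts, ellP_split ηm hε hm0 ht hts]
    ring
  have hFS : ∀ t : ℝ, F t ≤ S := by
    intro t
    rcases lt_or_ge 0 t with h | h
    · exact hS 0 t le_rfl h
    · simp only [hFdef, ellPdiff, ellP_empty h, sub_zero]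
      exact hS0
  set atil : ℝ → ℝ := fun t => sInf ((fun s => -F s) '' Set.Ioi t) with hadef
  have hbdd : ∀ t : ℝ, BddBelow ((fun s => -F s) '' Set.Ioi t) := by
    intro t
    refine ⟨-S, ?_⟩
    rintro y ⟨s, _, rfl⟩
    simpa using neg_le_neg (hFS s)
  have hne : ∀ t : ℝ, ((fun s => -F s) '' Set.Ioi t).Nonempty :=
    fun t => ⟨-F (t+1), ⟨t+1, by simp, rfl⟩⟩
  have atil_le : ∀ t s : ℝ, t < s → atil t ≤ -F s :=
    fun t s hs => csInf_le (hbdd t) ⟨s, hs, rfl⟩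
  have le_atil : ∀ t c : ℝ, (∀ s, t < s → c ≤ -F s) → c ≤ atil t := by
    intro t c h
    refine le_csInf (hne t) ?_
    rintro y ⟨s, hs, rfl⟩
    exact h s hs
  have hmono : Monotone atil :=
    fun t₁ t₂ h => le_atil t₂ (atil t₁) (fun s hs => atil_le t₁ s (lt_of_le_of_lt h hs))
  have hrc : ∀ x : ℝ, ContinuousWithinAt atil (Set.Ici x) x := by
    intro x
    rw [ContinuousWithinAt]
    refine tendsto_order.2 ⟨?_, ?_⟩
    · intro b hb
      filter_upwards [self_mem_nhdsWithin] with y hy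
      exact hb.trans_le (hmono hy)
    · intro b hb
      obtain ⟨s, hs, hFs⟩ : ∃ s, x < s ∧ -F s < b := by
        by_contra hcon
        push_neg at hcon
        exact absurd (le_atil x b (fun s hs => hcon s hs)) (not_le.2 hb)
      filter_upwards [Ico_mem_nhdsGE_of_mem (Set.left_mem_Ico.2 hs)] with y hy
      exact (atil_le y s hy.2).trans_lt hFs
  set sf : StieltjesFunction ℝ := ⟨atil, hmono, hrc⟩ with hsfdef
  have hsfapp : ∀ t : ℝ, sf t = atil t := fun t => rfl
  have hIoc : ∀ a b : ℝ, sf.measure (Set.Ioc a b) = ENNReal.ofReal (atil b - atil a) :=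
    fun a b => sf.measure_Ioc a b
  have hconst : ∀ t₁ t₂ : ℝ, t₁ ≤ t₂ → t₂ < ε → atil t₁ = atil t₂ := by
    intro t₁ t₂ h12 h2
    refine le_antisymm (hmono h12) ?_
    refine le_atil t₁ (atil t₂) (fun s hs => ?_)
    rcases lt_or_ge t₂ s with h | h
    · exact atil_le t₂ s h
    · rw [hFeps s (lt_of_le_of_lt h h2), neg_zero]
      have h3 : atil t₂ ≤ -F ((t₂ + ε)/2) := atil_le t₂ _ (by linarith)
      rwa [hFeps _ (by linarith), neg_zero] at h3
  set α : Measure ℂ := posMeasure sf with hαdef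
  have hαball : α (Metric.ball 0 (ε/2)) = 0 := by
    apply posMeasure_ball
    rw [hIoc, hconst (-(ε/2)) (ε/2) (by linarith) (by linarith)]
    simp
  have hGup : ∀ t : ℝ, 0 ≤ t → atil t ≤ -F t := by
    intro t ht
    have key : ∀ δ : ℝ, 0 < δ → atil t ≤ -F t + δ := by
      intro δ hδ
      have hex : ∃ s, t < s ∧ ellP ηm t s < δ := by
        rcases eq_or_lt_of_le ht with h0 | h0
        · refine ⟨ε/2, by linarith, ?_⟩
          rw [← h0, hnull ηm hm0 0 (ε/2) (by linarith)]
          exact hδ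
        · set sq : ℕ → Set ℂ := fun n => annulus t (t + 1/(n+1)) with hsq
          have hanti : Antitone sq := by
            intro n m hnm z hz
            refine ⟨hz.1, hz.2.trans ?_⟩
            have h1 : 1/((m:ℝ)+1) ≤ 1/((n:ℝ)+1) := by
              apply one_div_le_one_div_of_le (by positivity)
              exact_mod_cast Nat.succ_le_succ hnm
            linarith
          have hempty : ⋂ n, sq n = ∅ := by
            apply Set.eq_empty_iff_forall_notMem.mpr
            intro z hz
            rw [Set.mem_iInter] at hz
            obtain ⟨n, hn⟩ := exists_nat_one_div_lt (sub_pos.2 (hz 0).1 : (0:ℝ) < ‖z‖ - t)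
            have h2 : ‖z‖ ≤ t + 1/((n:ℝ)+1) := (hz n).2
            linarith
          have htend := tendsto_measure_iInter_atTop (μ := ηm)
            (fun n => (measurableSet_annulus _ _).nullMeasurableSet) hanti
            ⟨0, (annulus_fin ηm _ _).ne⟩
          rw [hempty, measure_empty] at htend
          have htoReal : Tendsto (fun n : ℕ => (ηm (sq n)).toReal) atTop (nhds 0) := by
            have h := (ENNReal.tendsto_toReal (by simp : (0:ENNReal) ≠ ⊤)).comp htend
            exact h
          have hev : ∀ᶠ n : ℕ in atTop, (ηm (sq n)).toReal < δ * t :=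
            htoReal.eventually_lt_const (by positivity)
          obtain ⟨n, hn⟩ := hev.exists
          refine ⟨t + 1/((n:ℝ)+1), by
            have hpos : (0:ℝ) < 1/((n:ℝ)+1) := by positivity
            linarith, ?_⟩
          calc ellP ηm t (t+1/((n:ℝ)+1)) ≤ (ηm (sq n)).toReal * (1/t) := ellP_le ηm hε hm0 h0 _
            _ < (δ*t) * (1/t) := by
                apply mul_lt_mul_of_pos_right hn (by positivity)
            _ = δ := by field_simp
      obtain ⟨s, hts, hsm⟩ := hex
      have h1 : atil t ≤ -F s := atil_le t s hts
      have h2 := hFadd t s ht hts.le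
      have h3 : 0 ≤ ellP ηp t s := ellP_nonneg ηp t s
      simp only [ellPdiff] at h2
      linarith
    by_contra hcon
    push_neg at hcon
    have := key ((atil t - (-F t))/2) (by linarith)
    linarith
  have hGlow : ∀ t : ℝ, 0 ≤ t → -F t - S ≤ atil t := by
    intro t ht
    refine le_atil t _ (fun s hs => ?_)
    have h2 := hFadd t s ht hs.le
    have h3 := hS t s ht hs
    linarith
  have hmain : ∀ r R : ℝ, 0 ≤ r → r < R → |ellPdiff (ηp + α) ηm r R| ≤ 2*S := by
    intro r R hr hrR
    have hsplit : ellP (ηp + α) r R = ellP ηp r R + ellP α r R :=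
      ellP_add_measure ηp α hε (by linarith) hp0 hαball r R
    have hα : ellP α r R = atil R - atil r := posMeasure_ellP sf hr hrR.le
    have hdiff := hFadd r R hr hrR.le
    have e1 := hGup r hr
    have e2 := hGup R (hr.trans hrR.le)
    have e3 := hGlow r hr
    have e4 := hGlow R (hr.trans hrR.le)
    have hexp : ellPdiff (ηp + α) ηm r R = (F R + atil R) - (F r + atil r) := by
      simp only [ellPdiff] at hdiff ⊢
      rw [hsplit, hα]
      linarith
    rw [hexp, abs_le]
    constructor <;> linarith
  refine ⟨α, posMeasure_finite sf, posMeasure_support sf, hmain, ?_⟩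
  intro _ hm'
  obtain ⟨C, hC⟩ := hm'
  obtain ⟨t₀, ht₀⟩ := eventually_atTop.mp hC
  set C' : ℝ := max C 0 with hC'def
  have hC'0 : 0 ≤ C' := le_max_right C 0
  set r₀ : ℝ := max 1 (max t₀ ε) with hr₀def
  have hr₀1 : (1:ℝ) ≤ r₀ := le_max_left _ _
  have hr₀pos : (0:ℝ) < r₀ := by linarith
  have hr₀t₀ : t₀ ≤ r₀ := le_trans (le_max_left _ _) (le_max_right _ _)
  have hinc : ∀ u, r₀ ≤ u → atil (2*u) - atil u ≤ 3*C' := by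
    intro u hu
    have hu1 : (1:ℝ) ≤ u := hr₀1.trans hu
    have hu0 : (0:ℝ) < u := by linarith
    have key : atil (2*u) - ellP ηm u (2*u+1) ≤ atil u := by
      refine le_atil u _ (fun s hs => ?_)
      rcases le_or_gt s (2*u) with h | h
      · have hadd := hFadd s (2*u+1) (by linarith) (by linarith)
        simp only [ellPdiff] at hadd
        have h1 : atil (2*u) ≤ -F (2*u+1) := atil_le _ _ (by linarith)
        have h2 : 0 ≤ ellP ηp s (2*u+1) := ellP_nonneg _ _ _
        have h3 : ellP ηm s (2*u+1) ≤ ellP ηm u (2*u+1) := by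
          have h4 := ellP_split ηm hε hm0 (r := u) (s := s) (R := 2*u+1) hs.le (by linarith)
          have h5 := ellP_nonneg ηm u s
          linarith
        linarith
      · have h1 : atil (2*u) ≤ -F s := atil_le _ _ h
        have h2 : 0 ≤ ellP ηm u (2*u+1) := ellP_nonneg _ _ _
        linarith
    have hbound : ellP ηm u (2*u+1) ≤ 3*C' := by
      have h1 := ellP_le ηm hε hm0 hu0 (2*u+1)
      have h2 : (ηm (annulus u (2*u+1))).toReal ≤ rad ηm (2*u+1) :=
        ENNReal.toReal_mono ((isCompact_closedBall (0:ℂ) (2*u+1)).measure_lt_top).ne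
          (measure_mono (annulus_subset_closedBall _ _))
      have h3 : rad ηm (2*u+1) ≤ C * (2*u+1) := ht₀ (2*u+1) (by linarith)
      have h4 : C * (2*u+1) ≤ C' * (2*u+1) :=
        mul_le_mul_of_nonneg_right (le_max_left _ _) (by linarith)
      have h5 : C' * (2*u+1) ≤ C' * (3*u) := mul_le_mul_of_nonneg_left (by linarith) hC'0
      calc ellP ηm u (2*u+1) ≤ (ηm (annulus u (2*u+1))).toReal * (1/u) := h1
        _ ≤ (C' * (3*u)) * (1/u) := by
            apply mul_le_mul_of_nonneg_right (by linarith) (by positivity)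
        _ = 3*C' := by field_simp
    linarith
  have hKnn : (0:ℝ) ≤ 3*C' := by linarith
  have hB0 : 0 ≤ r₀ * (atil r₀ - atil 0) :=
    mul_nonneg hr₀pos.le (sub_nonneg.2 (hmono (by linarith)))
  refine ⟨r₀ * (atil r₀ - atil 0) + 12*C', ?_⟩
  filter_upwards [eventually_ge_atTop r₀] with t ht
  obtain ⟨n, hn1, hn2⟩ := exists_dyadic hr₀pos ht
  have hw := dyadic_bound sf hr₀pos hKnn hinc n
  have hcb := posMeasure_closedBall_le sf (t := t) (u := r₀*2^n) hn1
  have hle : α (Metric.closedBall 0 t)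
      ≤ ENNReal.ofReal (r₀ * (atil r₀ - atil 0) + 2*(3*C')*(r₀*2^n)) := le_trans hcb hw
  have ht1 : (1:ℝ) ≤ t := hr₀1.trans ht
  have hpow0 : (0:ℝ) ≤ r₀ * 2^n := by positivity
  calc rad α t ≤ r₀ * (atil r₀ - atil 0) + 2*(3*C')*(r₀*2^n) := by
        refine le_trans (ENNReal.toReal_mono ENNReal.ofReal_ne_top hle) ?_
        rw [ENNReal.toReal_ofReal (by nlinarith)]
    _ ≤ r₀ * (atil r₀ - atil 0) + 6*C'*(2*t) := by nlinarith
    _ ≤ (r₀ * (atil r₀ - atil 0) + 12*C') * t := by nlinarith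
end

section
/- Let $\mu$ and $\nu$ be positive measures on $\mathbb{C}$ of finite upper density. Suppose there exists an unbounded increasing sequence $(r_n)_{n\ge 1}$ in $(0,+\infty)$ with $\limsup_{n\to\infty} r_{n+1}/r_n < +\infty$ such that $\limsup_{N\to\infty} \sup_{0 \le n < N} \big(\ell_\nu(r_n, r_N) - \ell_\mu(r_n, r_N)\big) < +\infty$. Then for every $r_0 > 0$, $\sup_{r_0 \le r < R < +\infty} \big(\ell_\nu(r,R) - \ell_\mu(r,R)\big) < +\infty$. -/
open MeasureTheory Filter

namespace Stmt7Aux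

lemma measurableSet_annulus (a b : ℝ) : MeasurableSet (annulus a b) := by
  have : annulus a b = {z : ℂ | a < ‖z‖} ∩ {z : ℂ | ‖z‖ ≤ b} := by
    ext z; simp [annulus]
  rw [this]
  exact (measurableSet_lt measurable_const measurable_norm).inter
    (measurableSet_le measurable_norm measurable_const)

lemma annulus_subset (a b : ℝ) : annulus a b ⊆ Metric.closedBall 0 b := by
  intro z hz
  simpa [Metric.mem_closedBall, dist_zero_right] using hz.2

lemma meas_annulus_lt_top (ν : Measure ℂ) [IsFiniteMeasureOnCompacts ν] (a b : ℝ) :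
    ν (annulus a b) < ⊤ :=
  lt_of_le_of_lt (measure_mono (annulus_subset a b))
    (isCompact_closedBall (0 : ℂ) b).measure_lt_top

lemma rad_nonneg (ν : Measure ℂ) (t : ℝ) : 0 ≤ rad ν t := ENNReal.toReal_nonneg

lemma rad_mono (ν : Measure ℂ) [IsFiniteMeasureOnCompacts ν] {a b : ℝ} (h : a ≤ b) :
    rad ν a ≤ rad ν b :=
  ENNReal.toReal_mono (isCompact_closedBall (0 : ℂ) b).measure_lt_top.ne
    (measure_mono (Metric.closedBall_subset_closedBall h))

section Generic

variable {g : ℂ → ℝ} (hgm : Measurable g) (hg0 : ∀ z, 0 ≤ g z) (hgb : ∀ z, g z ≤ ‖z‖⁻¹)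
variable (ν : Measure ℂ) [IsFiniteMeasureOnCompacts ν]

include hgm hg0 hgb in
lemma intOn {a b : ℝ} (ha : 0 < a) : IntegrableOn g (annulus a b) ν := by
  apply Measure.integrableOn_of_bounded (M := a⁻¹) (meas_annulus_lt_top ν a b).ne
    hgm.aestronglyMeasurable
  filter_upwards [ae_restrict_mem (measurableSet_annulus a b)] with z hz
  rw [Real.norm_eq_abs, abs_of_nonneg (hg0 z)]
  exact (hgb z).trans (inv_anti₀ ha hz.1.le)

include hgm hg0 hgb in
lemma setInt_le {a b : ℝ} (ha : 0 < a) :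
    ∫ z in annulus a b, g z ∂ν ≤ rad ν b / a := by
  have h1 : ∫ z in annulus a b, g z ∂ν ≤ ∫ _ in annulus a b, a⁻¹ ∂ν := by
    refine setIntegral_mono_on (intOn hgm hg0 hgb ν ha)
      (integrableOn_const (meas_annulus_lt_top ν a b).ne)
      (measurableSet_annulus a b) (fun z hz => ?_)
    exact (hgb z).trans (inv_anti₀ ha hz.1.le)
  rw [setIntegral_const, smul_eq_mul] at h1
  refine h1.trans ?_
  rw [div_eq_mul_inv]
  refine mul_le_mul_of_nonneg_right ?_ (inv_nonneg.2 ha.le)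
  exact ENNReal.toReal_mono (isCompact_closedBall (0 : ℂ) b).measure_lt_top.ne
    (measure_mono (annulus_subset a b))

lemma annulus_union {a b c : ℝ} (hab : a ≤ b) (hbc : b ≤ c) :
    annulus a b ∪ annulus b c = annulus a c := by
  ext z
  simp only [annulus, Set.mem_union, Set.mem_setOf_eq]
  constructor
  · rintro (⟨h1, h2⟩ | ⟨h1, h2⟩)
    · exact ⟨h1, h2.trans hbc⟩
    · exact ⟨lt_of_le_of_lt hab h1, h2⟩
  · rintro ⟨h1, h2⟩
    by_cases h : ‖z‖ ≤ b
    · exact Or.inl ⟨h1, h⟩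
    · exact Or.inr ⟨lt_of_not_ge h, h2⟩

include hgm hg0 hgb in
lemma setInt_add {a b c : ℝ} (ha : 0 < a) (hab : a ≤ b) (hbc : b ≤ c) :
    ∫ z in annulus a c, g z ∂ν
      = (∫ z in annulus a b, g z ∂ν) + ∫ z in annulus b c, g z ∂ν := by
  rw [← annulus_union hab hbc]
  refine setIntegral_union ?_ (measurableSet_annulus b c)
    (intOn hgm hg0 hgb ν ha) (intOn hgm hg0 hgb ν (ha.trans_le hab))
  rw [Set.disjoint_left]
  rintro z ⟨_, h2⟩ ⟨h3, _⟩
  exact absurd h2 (not_le.2 h3)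

include hgm hg0 hgb in
lemma setInt_mono {a a' b' b : ℝ} (ha : 0 < a) (h1 : a ≤ a') (h2 : b' ≤ b) :
    ∫ z in annulus a' b', g z ∂ν ≤ ∫ z in annulus a b, g z ∂ν := by
  refine setIntegral_mono_set (intOn hgm hg0 hgb ν ha) ?_ ?_
  · exact Filter.Eventually.of_forall fun z => hg0 z
  · exact HasSubset.Subset.eventuallyLE fun z hz => ⟨lt_of_le_of_lt h1 hz.1, hz.2.trans h2⟩

end Generic

lemma gP_meas : Measurable (fun z : ℂ => max (1 / z).re 0) :=
  (Complex.measurable_re.comp (measurable_one.div measurable_id)).max measurable_const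

lemma gM_meas : Measurable (fun z : ℂ => max (-(1 / z).re) 0) :=
  (Complex.measurable_re.comp (measurable_one.div measurable_id)).neg.max measurable_const

lemma gP_nonneg : ∀ z : ℂ, 0 ≤ max (1 / z).re 0 := fun z => le_max_right _ _
lemma gM_nonneg : ∀ z : ℂ, 0 ≤ max (-(1 / z).re) 0 := fun z => le_max_right _ _

lemma gP_bound : ∀ z : ℂ, max (1 / z).re 0 ≤ ‖z‖⁻¹ := by
  intro z
  have h : (1 / z).re ≤ ‖z‖⁻¹ := by
    calc (1 / z).re ≤ |(1 / z).re| := le_abs_self _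
    _ ≤ ‖1 / z‖ := Complex.abs_re_le_norm _
    _ = ‖z‖⁻¹ := by rw [one_div, norm_inv]
  exact max_le h (inv_nonneg.2 (norm_nonneg z))

lemma gM_bound : ∀ z : ℂ, max (-(1 / z).re) 0 ≤ ‖z‖⁻¹ := by
  intro z
  have h : -(1 / z).re ≤ ‖z‖⁻¹ := by
    calc -(1 / z).re ≤ |(1 / z).re| := neg_le_abs _
    _ ≤ ‖1 / z‖ := Complex.abs_re_le_norm _
    _ = ‖z‖⁻¹ := by rw [one_div, norm_inv]
  exact max_le h (inv_nonneg.2 (norm_nonneg z))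

variable (ν : Measure ℂ) [IsFiniteMeasureOnCompacts ν]

lemma ell_nonneg (a b : ℝ) : 0 ≤ ell ν a b := by
  refine le_max_of_le_left ?_
  exact setIntegral_nonneg (measurableSet_annulus a b) fun z _ => le_max_right _ _

lemma ell_le_rad {a b : ℝ} (ha : 0 < a) : ell ν a b ≤ rad ν b / a :=
  max_le (setInt_le gP_meas gP_nonneg gP_bound ν ha)
    (setInt_le gM_meas gM_nonneg gM_bound ν ha)

lemma ell_subadd {a b c : ℝ} (ha : 0 < a) (hab : a ≤ b) (hbc : b ≤ c) :
    ell ν a c ≤ ell ν a b + ell ν b c := by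
  refine max_le ?_ ?_
  · rw [show ellP ν a c = ellP ν a b + ellP ν b c from
      setInt_add gP_meas gP_nonneg gP_bound ν ha hab hbc]
    exact add_le_add (le_max_left _ _) (le_max_left _ _)
  · rw [show ellM ν a c = ellM ν a b + ellM ν b c from
      setInt_add gM_meas gM_nonneg gM_bound ν ha hab hbc]
    exact add_le_add (le_max_right _ _) (le_max_right _ _)

lemma ell_mono {a a' b' b : ℝ} (ha : 0 < a) (h1 : a ≤ a') (h2 : b' ≤ b) :
    ell ν a' b' ≤ ell ν a b :=
  max_le_max (setInt_mono gP_meas gP_nonneg gP_bound ν ha h1 h2)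
    (setInt_mono gM_meas gM_nonneg gM_bound ν ha h1 h2)

lemma ell_self (a : ℝ) : ell ν a a = 0 := by
  have h : annulus a a = ∅ := by
    ext z; simp only [annulus, Set.mem_setOf_eq, Set.mem_empty_iff_false, iff_false]
    rintro ⟨h1, h2⟩; exact absurd h2 (not_le.2 h1)
  simp [ell, ellP, ellM, h]

lemma density_strong (h : FiniteUpperDensity ν) {r0 : ℝ} (hr0 : 0 < r0) :
    ∃ D : ℝ, 0 ≤ D ∧ ∀ t, r0 ≤ t → rad ν t ≤ D * t := by
  obtain ⟨C0, hC0⟩ := h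
  obtain ⟨T, hT⟩ := eventually_atTop.mp hC0
  refine ⟨max C0 (rad ν (max T r0) / r0),
    le_trans (div_nonneg (rad_nonneg ν _) hr0.le) (le_max_right _ _), fun t ht => ?_⟩
  rcases le_or_gt (max T r0) t with h' | h'
  · exact (hT t ((le_max_left _ _).trans h')).trans
      (mul_le_mul_of_nonneg_right (le_max_left _ _) (hr0.le.trans ht))
  · calc rad ν t ≤ rad ν (max T r0) := rad_mono ν h'.le
    _ = (rad ν (max T r0) / r0) * r0 := (div_mul_cancel₀ _ hr0.ne').symm
    _ ≤ max C0 (rad ν (max T r0) / r0) * t := by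
        refine mul_le_mul (le_max_right _ _) ht hr0.le ?_
        exact le_trans (div_nonneg (rad_nonneg ν _) hr0.le) (le_max_right _ _)

lemma ratio_strong (r : ℕ → ℝ) (hpos : ∀ n, 0 < r n)
    (h : ∃ A : ℝ, ∀ᶠ n in atTop, r (n + 1) / r n ≤ A) :
    ∃ A : ℝ, 1 ≤ A ∧ ∀ n, r (n + 1) ≤ A * r n := by
  obtain ⟨A0, hA0⟩ := h
  obtain ⟨n0, hn0⟩ := eventually_atTop.mp hA0
  have hne : (Finset.range (n0 + 1)).Nonempty := ⟨0, by simp⟩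
  refine ⟨max 1 (max A0 ((Finset.range (n0 + 1)).sup' hne (fun n => r (n + 1) / r n))),
    le_max_left _ _, fun n => ?_⟩
  have hq : r (n + 1) / r n
      ≤ max 1 (max A0 ((Finset.range (n0 + 1)).sup' hne (fun n => r (n + 1) / r n))) := by
    rcases le_or_gt n0 n with h | h
    · exact (hn0 n h).trans ((le_max_left _ _).trans (le_max_right _ _))
    · exact (Finset.le_sup' (fun n => r (n + 1) / r n)
        (Finset.mem_range.2 (by omega))).trans ((le_max_right _ _).trans (le_max_right _ _))
  rwa [div_le_iff₀ (hpos n)] at hq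

end Stmt7Aux

open Stmt7Aux

/-- If along an unbounded increasing sequence `(r_n)` growing no
faster than a geometric progression one has
`limsup_N sup_{n<N} (ℓ_ν(r_n,r_N) - ℓ_μ(r_n,r_N)) < +∞`, then for every
`r₀ > 0`, `sup_{r₀ ≤ r < R} (ℓ_ν(r,R) - ℓ_μ(r,R)) < +∞`. -/
theorem stmt7 (μ ν : Measure ℂ)
    [IsFiniteMeasureOnCompacts μ] [IsFiniteMeasureOnCompacts ν]
    (hμ : FiniteUpperDensity μ) (hν : FiniteUpperDensity ν)
    (r : ℕ → ℝ) (hpos : ∀ n, 0 < r n) (hmono : Monotone r)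
    (hunb : Tendsto r atTop atTop)
    (hratio : ∃ A : ℝ, ∀ᶠ n in atTop, r (n + 1) / r n ≤ A)
    (hsup : ∃ B : ℝ, ∀ᶠ N in atTop, ∀ n < N,
      ell ν (r n) (r N) - ell μ (r n) (r N) ≤ B) :
    ∀ r0 : ℝ, 0 < r0 → ∃ C : ℝ, ∀ s R : ℝ, r0 ≤ s → s < R →
      ell ν s R - ell μ s R ≤ C := by
  classical
  intro r0 hr0
  obtain ⟨D, hD0, hD⟩ := density_strong ν hν hr0
  obtain ⟨A, hA1, hA⟩ := ratio_strong r hpos hratio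
  obtain ⟨B, hBev⟩ := hsup
  obtain ⟨N0, hB⟩ := eventually_atTop.mp hBev
  set B' := max B 0 with hB'def
  have hB'0 : 0 ≤ B' := le_max_right _ _
  set A3 := max A (r 0 / r0) with hA3def
  have hA31 : 1 ≤ A3 := hA1.trans (le_max_left _ _)
  set K := rad ν (r N0) / r0 with hKdef
  set C : ℝ := max K (max (D * A) (D * A3 + B' + D * A)) with hCdef
  have hC1 : K ≤ C := le_max_left _ _
  have hC2 : D * A ≤ C := (le_max_left _ _).trans (le_max_right _ _)
  have hC3 : D * A3 + B' + D * A ≤ C := (le_max_right _ _).trans (le_max_right _ _)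
  refine ⟨C, fun s R hs hsR => ?_⟩
  have hs0 : 0 < s := hr0.trans_le hs
  have hR0 : r0 ≤ R := hs.trans hsR.le
  have hμ0 : 0 ≤ ell μ s R := ell_nonneg μ s R
  by_cases hcase : R ≤ r N0
  · have h1 : ell ν s R ≤ rad ν R / s := ell_le_rad ν hs0
    have h2 : rad ν R / s ≤ K :=
      div_le_div₀ (rad_nonneg ν _) (rad_mono ν hcase) hr0 hs
    linarith
  · push_neg at hcase
    obtain ⟨m, hm⟩ := (hunb.eventually (eventually_gt_atTop R)).exists
    have hN0m : N0 ≤ m := by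
      by_contra h
      push_neg at h
      have := hmono h.le
      linarith
    set N := Nat.findGreatest (fun k => r k ≤ R) m with hNdef
    have hNspec : r N ≤ R := Nat.findGreatest_spec (P := fun k => r k ≤ R) hN0m hcase.le
    have hN0N : N0 ≤ N := Nat.le_findGreatest (P := fun k => r k ≤ R) hN0m hcase.le
    have hRN1 : R < r (N + 1) := by
      by_cases h : N + 1 ≤ m
      · exact not_le.1 (Nat.findGreatest_is_greatest (P := fun k => r k ≤ R) (Nat.lt_succ_self N) h)
      · push_neg at h
        exact hm.trans_le (hmono (by omega))
    have hRAN : R < A * r N := hRN1.trans_le (hA N)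
    have hex : ∃ k, s < r k := (hunb.eventually (eventually_gt_atTop s)).exists
    set n := Nat.find hex with hndef
    have hsn : s < r n := Nat.find_spec hex
    have hrnA3 : r n ≤ A3 * s := by
      rcases Nat.eq_zero_or_pos n with h0 | hp
      · rw [h0]
        calc r 0 = (r 0 / r0) * r0 := (div_mul_cancel₀ _ hr0.ne').symm
          _ ≤ (r 0 / r0) * s := by
              exact mul_le_mul_of_nonneg_left hs (div_nonneg (hpos 0).le hr0.le)
          _ ≤ A3 * s := mul_le_mul_of_nonneg_right (le_max_right _ _) hs0.le
      · have hk : ¬ s < r (n - 1) := Nat.find_min hex (Nat.sub_lt hp one_pos)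
        push_neg at hk
        have h1 : r n ≤ A * r (n - 1) := by
          have := hA (n - 1)
          rwa [Nat.sub_add_cancel hp] at this
        calc r n ≤ A * r (n - 1) := h1
          _ ≤ A * s := mul_le_mul_of_nonneg_left hk (by linarith)
          _ ≤ A3 * s := mul_le_mul_of_nonneg_right (le_max_left _ _) hs0.le
    by_cases hns : r N ≤ s
    · have hRAs : R < A * s := hRAN.trans_le (mul_le_mul_of_nonneg_left hns (by linarith))
      have h1 : ell ν s R ≤ rad ν R / s := ell_le_rad ν hs0
      have h2 : rad ν R ≤ D * R := hD R hR0
      have h3 : rad ν R / s ≤ D * A := by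
        rw [div_le_iff₀ hs0]
        calc rad ν R ≤ D * R := h2
          _ ≤ D * (A * s) := mul_le_mul_of_nonneg_left hRAs.le hD0
          _ = D * A * s := by ring
      linarith
    · push_neg at hns
      have hnN : n ≤ N := Nat.find_min' hex hns
      have hrnN : r n ≤ r N := hmono hnN
      have hsub : ell ν s R ≤ ell ν s (r n) + ell ν (r n) (r N) + ell ν (r N) R := by
        have h1 := ell_subadd ν hs0 hsn.le ((hrnN.trans hNspec))
        have h2 := ell_subadd ν (hpos n) hrnN hNspec
        linarith
      have hmid : ell ν (r n) (r N) ≤ ell μ (r n) (r N) + B' := by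
        rcases eq_or_lt_of_le hnN with heq | hlt
        · rw [heq, ell_self]
          have := ell_nonneg μ (r N) (r N)
          linarith
        · have := hB N hN0N n hlt
          have hBB' : B ≤ B' := le_max_left _ _
          linarith
      have hmono' : ell μ (r n) (r N) ≤ ell μ s R :=
        ell_mono μ hs0 hsn.le hNspec
      have h1 : ell ν s (r n) ≤ D * A3 := by
        have ha := ell_le_rad ν hs0 (b := r n)
        have h2 : rad ν (r n) ≤ D * r n := hD _ (hs.trans hsn.le)
        have h3 : rad ν (r n) / s ≤ D * A3 := by
          rw [div_le_iff₀ hs0]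
          calc rad ν (r n) ≤ D * r n := h2
            _ ≤ D * (A3 * s) := mul_le_mul_of_nonneg_left hrnA3 hD0
            _ = D * A3 * s := by ring
        linarith
      have h3 : ell ν (r N) R ≤ D * A := by
        have ha := ell_le_rad ν (hpos N) (b := R)
        have h2 : rad ν R ≤ D * R := hD R hR0
        have h4 : rad ν R / r N ≤ D * A := by
          rw [div_le_iff₀ (hpos N)]
          calc rad ν R ≤ D * R := h2
            _ ≤ D * (A * r N) := mul_le_mul_of_nonneg_left hRAN.le hD0
            _ = D * A * r N := by ring
        linarith
      linarith
end

section
/- Let $\nu$ be a signed measure of finite upper density on $\mathbb{C}$, let $w \in \mathbb{C}$, and let $\nu_{\vec{w}}$ denote the translate of $\nu$ by $w$ (i.e. $\nu_{\vec w}(K) = \nu(K - w)$). Then for any $r_0 > 0$, $\sup_{r \ge r_0} |\ell^{\vdash}_{\nu - \nu_{\vec w}}(r_0, r)| + \sup_{r \ge r_0} |\ell^{\dashv}_{\nu - \nu_{\vec w}}(r_0, r)| < +\infty$. -/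
set_option maxHeartbeats 2000000


open MeasureTheory Filter

namespace Stmt9Aux

lemma measurableSet_annulus (r R : ℝ) : MeasurableSet (annulus r R) :=
  (measurableSet_lt measurable_const measurable_norm).inter
    (measurableSet_le measurable_norm measurable_const)

lemma annulus_subset (r R : ℝ) : annulus r R ⊆ Metric.closedBall 0 R := fun z hz => by
  simpa [mem_closedBall_zero_iff] using hz.2

variable {ν : Measure ℂ} [IsFiniteMeasureOnCompacts ν]

lemma meas_ne_top_of_subset_ball {s : Set ℂ} {R : ℝ} (h : s ⊆ Metric.closedBall 0 R) :
    ν s ≠ ⊤ :=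
  ((measure_mono h).trans_lt (isCompact_closedBall (0:ℂ) R).measure_lt_top).ne

lemma integrableOn_bdd {f : ℂ → ℝ} {s : Set ℂ} {R M : ℝ}
    (hs : MeasurableSet s) (hsub : s ⊆ Metric.closedBall 0 R) (hf : Measurable f)
    (hM : ∀ z ∈ s, |f z| ≤ M) : IntegrableOn f s ν := by
  refine Measure.integrableOn_of_bounded (M := M) (meas_ne_top_of_subset_ball hsub)
    hf.aestronglyMeasurable ?_
  exact ae_restrict_of_forall_mem hs (fun z hz => by simpa using hM z hz)

lemma measurable_invsq : Measurable (fun z : ℂ => (‖z‖^2)⁻¹) :=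
  (measurable_norm.pow_const 2).inv

/-- Dyadic tail bound: integral of `‖z‖⁻²` over `annulus R1 s` is uniformly bounded. -/
lemma tail_bound {C0 R1 : ℝ} (hR1 : 1 ≤ R1)
    (hd : ∀ t ≥ R1, (ν (Metric.closedBall 0 t)).toReal ≤ C0 * t) (s : ℝ) :
    ∫ z in annulus R1 s, (‖z‖^2)⁻¹ ∂ν ≤ 4 * C0 := by
  have hR1pos : 0 < R1 := lt_of_lt_of_le one_pos hR1
  have hC0 : 0 ≤ C0 := by
    have h0 := hd R1 le_rfl
    nlinarith [ENNReal.toReal_nonneg (a := ν (Metric.closedBall (0:ℂ) R1))]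
  -- integrability of ‖z‖⁻² on annuli above R1
  have hint : ∀ a b : ℝ, R1 ≤ a → IntegrableOn (fun z : ℂ => (‖z‖^2)⁻¹) (annulus a b) ν := by
    intro a b ha
    refine integrableOn_bdd (measurableSet_annulus a b) (annulus_subset a b)
      measurable_invsq (M := (a^2)⁻¹) ?_
    intro z hz
    have hza : a < ‖z‖ := hz.1
    have hapos : 0 < a := lt_of_lt_of_le hR1pos ha
    rw [abs_of_nonneg (by positivity)]
    have : a^2 ≤ ‖z‖^2 := by nlinarith
    exact inv_anti₀ (by positivity) this
  -- single dyadic step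
  have step : ∀ a : ℝ, R1 ≤ a →
      ∫ z in annulus a (2*a), (‖z‖^2)⁻¹ ∂ν ≤ 2 * C0 / a := by
    intro a ha
    have hapos : 0 < a := lt_of_lt_of_le hR1pos ha
    have hfin : ν (annulus a (2*a)) ≠ ⊤ := meas_ne_top_of_subset_ball (annulus_subset a (2*a))
    have h1 : ∫ z in annulus a (2*a), (‖z‖^2)⁻¹ ∂ν
        ≤ ∫ _ in annulus a (2*a), (a^2)⁻¹ ∂ν := by
      refine setIntegral_mono_on (hint a (2*a) ha) ?_ (measurableSet_annulus _ _) ?_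
      · exact integrableOn_const hfin
      · intro z hz
        have : a^2 ≤ ‖z‖^2 := by nlinarith [hz.1]
        exact inv_anti₀ (by positivity) this
    rw [setIntegral_const] at h1
    have h2 : (ν (annulus a (2*a))).toReal ≤ C0 * (2*a) := by
      refine le_trans ?_ (hd (2*a) (by linarith))
      exact ENNReal.toReal_mono (meas_ne_top_of_subset_ball (Set.Subset.refl _))
        (measure_mono (annulus_subset a (2*a)))
    have ha2 : (0:ℝ) < a^2 := by positivity
    calc ∫ z in annulus a (2*a), (‖z‖^2)⁻¹ ∂ν ≤ (ν (annulus a (2*a))).toReal • (a^2)⁻¹ := h1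
      _ ≤ (C0 * (2*a)) * (a^2)⁻¹ := by
          rw [smul_eq_mul]
          exact mul_le_mul_of_nonneg_right h2 (by positivity)
      _ = 2 * C0 / a := by field_simp
  -- dyadic decomposition
  have decomp : ∀ n : ℕ, ∫ z in annulus R1 (2^n * R1), (‖z‖^2)⁻¹ ∂ν
      ≤ 4 * C0 * (1 - (2⁻¹:ℝ)^n) := by
    intro n
    induction n with
    | zero =>
      have : annulus R1 ((2:ℝ)^0 * R1) = ∅ := by
        ext z; simp only [annulus, Set.mem_setOf_eq, Set.mem_empty_iff_false, iff_false]
        intro h; rw [pow_zero, one_mul] at h; linarith [h.1, h.2]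
      rw [this]
      simp
    | succ n ih =>
      have hpow : (1:ℝ) ≤ 2^n := one_le_pow₀ (by norm_num : (1:ℝ) ≤ 2)
      have hup : annulus R1 (2^(n+1) * R1)
          = annulus R1 (2^n * R1) ∪ annulus (2^n * R1) (2^(n+1) * R1) := by
        ext z
        simp only [annulus, Set.mem_setOf_eq, Set.mem_union]
        constructor
        · rintro ⟨h1, h2⟩
          rcases le_or_gt ‖z‖ (2^n * R1) with h | h
          · exact Or.inl ⟨h1, h⟩
          · exact Or.inr ⟨h, h2⟩
        · rintro (⟨h1, h2⟩ | ⟨h1, h2⟩)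
          · refine ⟨h1, h2.trans ?_⟩
            have : (2:ℝ)^n ≤ 2^(n+1) := by
              have := pow_le_pow_right₀ (a := (2:ℝ)) (by norm_num) (Nat.le_succ n)
              simpa using this
            nlinarith
          · refine ⟨lt_of_le_of_lt ?_ h1, h2⟩
            nlinarith
      have hdisj : Disjoint (annulus R1 (2^n * R1)) (annulus (2^n * R1) (2^(n+1) * R1)) := by
        rw [Set.disjoint_left]
        intro z hz hz'
        exact absurd hz.2 (not_le.2 hz'.1)
      rw [hup, setIntegral_union hdisj (measurableSet_annulus _ _)
        (hint _ _ le_rfl) (hint _ _ (by nlinarith))]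
      have hstep := step (2^n * R1) (by nlinarith)
      have hrw : (2:ℝ) * (2^n * R1) = 2^(n+1) * R1 := by ring
      rw [hrw] at hstep
      have hp2 : (0:ℝ) < 2^n := by positivity
      have hstep' : ∫ z in annulus (2^n * R1) (2^(n+1) * R1), (‖z‖^2)⁻¹ ∂ν
          ≤ 2 * C0 * ((2:ℝ)⁻¹)^n := by
        rw [inv_pow, ← div_eq_mul_inv]
        refine hstep.trans ?_
        exact div_le_div_of_nonneg_left (by linarith) hp2 (by nlinarith)
      have hps : ((2:ℝ)⁻¹)^(n+1) = ((2:ℝ)⁻¹)^n * 2⁻¹ := pow_succ _ _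
      rw [hps]
      nlinarith [ih, hstep']
  -- conclude
  obtain ⟨n, hn⟩ := pow_unbounded_of_one_lt s (one_lt_two (α := ℝ))
  have hsub : annulus R1 s ⊆ annulus R1 (2^n * R1) := by
    intro z hz
    have hp2 : (0:ℝ) < 2^n := by positivity
    exact ⟨hz.1, by nlinarith [hz.2]⟩
  have hmono : ∫ z in annulus R1 s, (‖z‖^2)⁻¹ ∂ν
      ≤ ∫ z in annulus R1 (2^n * R1), (‖z‖^2)⁻¹ ∂ν := by
    refine setIntegral_mono_set (hint R1 (2^n * R1) le_rfl) ?_ hsub.eventuallyLE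
    exact Filter.Eventually.of_forall fun z => by positivity
  refine hmono.trans ((decomp n).trans ?_)
  nlinarith [pow_nonneg (by norm_num : (0:ℝ) ≤ 2⁻¹) n]

lemma fin_upper_density_aux {ν : Measure ℂ} (hν : FiniteUpperDensity ν) :
    ∃ C0 T0 : ℝ, 0 ≤ C0 ∧ 1 ≤ T0 ∧ ∀ t ≥ T0, (ν (Metric.closedBall 0 t)).toReal ≤ C0 * t := by
  obtain ⟨C, hC⟩ := hν
  obtain ⟨a, ha⟩ := eventually_atTop.1 hC
  refine ⟨max C 0, max a 1, le_max_right _ _, le_max_right _ _, ?_⟩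
  intro t ht
  have ht1 : (1:ℝ) ≤ t := le_trans (le_max_right a 1) ht
  have h2 : rad ν t ≤ C * t := ha t (le_trans (le_max_left a 1) ht)
  calc (ν (Metric.closedBall 0 t)).toReal = rad ν t := rfl
    _ ≤ C * t := h2
    _ ≤ max C 0 * t := mul_le_mul_of_nonneg_right (le_max_left _ _) (by linarith)

lemma key {ν : Measure ℂ} [IsFiniteMeasureOnCompacts ν]
    (hν : FiniteUpperDensity ν) (w : ℂ) (f : ℂ → ℝ) (hmf : Measurable f)
    (hb : ∀ z : ℂ, |f z| ≤ ‖z‖⁻¹)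
    (hlip : ∀ z z' : ℂ, |f z - f z'| ≤ ‖1/z - 1/z'‖)
    {r0 : ℝ} (hr0 : 0 < r0) :
    ∃ C : ℝ, ∀ r ≥ r0,
      |(∫ z in annulus r0 r, f z ∂ν) -
        ∫ z in annulus r0 r, f z ∂(Measure.map (· + w) ν)| ≤ C := by
  obtain ⟨C0, T0, hC0, hT0, hd⟩ := fin_upper_density_aux hν
  set K := ‖w‖ with hKdef
  have hK0 : 0 ≤ K := norm_nonneg w
  set R1 : ℝ := 2*r0 + 2*K + T0 with hR1def
  have hR1_1 : 1 ≤ R1 := by linarith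
  have hR1pos : 0 < R1 := by linarith
  have hR1T0 : T0 ≤ R1 := by linarith
  set R2 : ℝ := R1 + 3*K + 1 with hR2def
  set M1 : ℝ := (2/r0) * (ν (Metric.closedBall 0 R1)).toReal with hM1def
  set M2 : ℝ := (2/r0) * (ν (Metric.closedBall 0 (R2+K))).toReal with hM2def
  refine ⟨max M2 (M1 + (2*K*(4*C0) + 6*C0)), ?_⟩
  intro r hr
  set A : Set ℂ := annulus r0 r with hAdef
  set g : ℂ → ℝ := A.indicator f with hgdef
  have hgmeas : Measurable g := hmf.indicator (measurableSet_annulus _ _)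
  have hgbd : ∀ z : ℂ, |g z| ≤ r0⁻¹ := by
    intro z
    by_cases hz : z ∈ A
    · rw [hgdef, Set.indicator_of_mem hz]
      exact (hb z).trans (inv_anti₀ hr0 hz.1.le)
    · rw [hgdef, Set.indicator_of_notMem hz, abs_zero]
      positivity
  -- rewrite the two integrals
  have hmap : (∫ z in annulus r0 r, f z ∂(Measure.map (· + w) ν)) = ∫ z, g (z + w) ∂ν := by
    rw [← integral_indicator (measurableSet_annulus _ _)]
    exact integral_map (measurable_id.add_const w).aemeasurable hgmeas.aestronglyMeasurable
  have hlhs : (∫ z in annulus r0 r, f z ∂ν) = ∫ z, g z ∂ν :=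
    (integral_indicator (measurableSet_annulus _ _)).symm
  set U : Set ℂ := Metric.closedBall 0 (r+K) with hUdef
  have hg_zero : ∀ z ∉ U, g z = 0 := by
    intro z hz
    rw [hUdef, Metric.mem_closedBall, dist_zero_right, not_le] at hz
    refine Set.indicator_of_notMem (fun h => ?_) f
    have := h.2; linarith
  have hgw_zero : ∀ z ∉ U, g (z + w) = 0 := by
    intro z hz
    rw [hUdef, Metric.mem_closedBall, dist_zero_right, not_le] at hz
    have hzw : ‖z‖ - K ≤ ‖z + w‖ := by
      have h := norm_add_le (z+w) (-w)
      rw [add_neg_cancel_right, norm_neg] at h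
      linarith
    refine Set.indicator_of_notMem (fun h => ?_) f
    have := h.2; linarith
  have hE1 : (∫ z, g z ∂ν) = ∫ z in U, g z ∂ν :=
    (setIntegral_eq_integral_of_forall_compl_eq_zero hg_zero).symm
  have hE2 : (∫ z, g (z + w) ∂ν) = ∫ z in U, g (z + w) ∂ν :=
    (setIntegral_eq_integral_of_forall_compl_eq_zero hgw_zero).symm
  have hi1 : IntegrableOn g U ν :=
    integrableOn_bdd Metric.isClosed_closedBall.measurableSet (Set.Subset.refl _) hgmeas
      (fun z _ => hgbd z)
  have hi2 : IntegrableOn (fun z => g (z + w)) U ν :=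
    integrableOn_bdd Metric.isClosed_closedBall.measurableSet (Set.Subset.refl _)
      (hgmeas.comp (measurable_id.add_const w)) (fun z _ => hgbd (z+w))
  have hiF : IntegrableOn (fun z => g z - g (z + w)) U ν := hi1.sub hi2
  have hdiff : (∫ z in annulus r0 r, f z ∂ν) -
      (∫ z in annulus r0 r, f z ∂(Measure.map (· + w) ν))
      = ∫ z in U, (g z - g (z + w)) ∂ν := by
    rw [hlhs, hmap, hE1, hE2, ← integral_sub hi1 hi2]
  have hFbd : ∀ z : ℂ, |g z - g (z + w)| ≤ 2/r0 := by
    intro z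
    have h1 := hgbd z
    have h2 := hgbd (z+w)
    have := abs_sub (g z) (g (z+w))
    have h3 : (2:ℝ)/r0 = r0⁻¹ + r0⁻¹ := by field_simp; ring
    rw [h3]
    exact this.trans (add_le_add h1 h2)
  have hFmeas : Measurable (fun z => g z - g (z + w)) :=
    hgmeas.sub (hgmeas.comp (measurable_id.add_const w))
  rw [hdiff]
  rcases le_or_gt r R2 with hsmall | hbig
  · -- small r: crude bound
    have hb1 : |∫ z in U, (g z - g (z + w)) ∂ν| ≤ (2/r0) * (ν U).toReal := by
      have := norm_setIntegral_le_of_norm_le_const (f := fun z => g z - g (z + w))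
        (μ := ν) (s := U) (C := 2/r0)
        ((meas_ne_top_of_subset_ball (Set.Subset.refl _)).lt_top)
        (fun z _ => by simpa [Real.norm_eq_abs] using hFbd z)
      simpa [Real.norm_eq_abs, measureReal_def] using this
    have hb2 : (2/r0) * (ν U).toReal ≤ M2 := by
      refine mul_le_mul_of_nonneg_left ?_ (by positivity)
      refine ENNReal.toReal_mono (meas_ne_top_of_subset_ball (Set.Subset.refl _)) ?_
      exact measure_mono (Metric.closedBall_subset_closedBall (by linarith))
    exact le_trans (hb1.trans hb2) (le_max_left _ _)
  · -- large r
    have hrR1 : R1 < r := by linarith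
    have hrKpos : 0 < r - K := by linarith
    have hr3K : 3*K + 1 ≤ r := by linarith
    set B1 : Set ℂ := Metric.closedBall 0 R1 with hB1def
    set B2 : Set ℂ := annulus R1 (r+K) with hB2def
    have hUeq : U = B1 ∪ B2 := by
      ext z
      simp only [hUdef, hB1def, hB2def, Metric.mem_closedBall, dist_zero_right,
        Set.mem_union, annulus, Set.mem_setOf_eq]
      constructor
      · intro h
        rcases le_or_gt ‖z‖ R1 with h1 | h1
        · exact Or.inl h1
        · exact Or.inr ⟨h1, h⟩
      · rintro (h1 | ⟨h1, h2⟩)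
        · linarith
        · exact h2
    have hdisjB : Disjoint B1 B2 := by
      rw [Set.disjoint_left]
      intro z hz hz'
      rw [hB1def, Metric.mem_closedBall, dist_zero_right] at hz
      have hz'' : R1 < ‖z‖ ∧ ‖z‖ ≤ r + K := hz'
      exact absurd hz (not_le.2 hz''.1)
    have hB1sub : B1 ⊆ U := by rw [hUeq]; exact Set.subset_union_left
    have hB2sub' : B2 ⊆ U := by rw [hUeq]; exact Set.subset_union_right
    have hsplit : ∫ z in U, (g z - g (z + w)) ∂ν
        = (∫ z in B1, (g z - g (z + w)) ∂ν) + ∫ z in B2, (g z - g (z + w)) ∂ν := by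
      rw [hUeq]
      exact setIntegral_union hdisjB (measurableSet_annulus _ _)
        (hiF.mono_set hB1sub) (hiF.mono_set hB2sub')
    have hp1 : |∫ z in B1, (g z - g (z + w)) ∂ν| ≤ M1 := by
      have := norm_setIntegral_le_of_norm_le_const (f := fun z => g z - g (z + w))
        (μ := ν) (s := B1) (C := 2/r0)
        ((meas_ne_top_of_subset_ball (Set.Subset.refl _)).lt_top)
        (fun z _ => by simpa [Real.norm_eq_abs] using hFbd z)
      simpa [Real.norm_eq_abs, measureReal_def] using this
    set Sh : Set ℂ := annulus (r-K) (r+K) with hShdef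
    have hiφ1 : IntegrableOn (fun z : ℂ => 2*K*(‖z‖^2)⁻¹) B2 ν := by
      refine integrableOn_bdd (measurableSet_annulus _ _) (annulus_subset _ _)
        (measurable_invsq.const_mul (2*K)) (M := 2*K*(R1^2)⁻¹) ?_
      intro z hz
      have hz' : R1 < ‖z‖ ∧ ‖z‖ ≤ r + K := hz
      rw [abs_of_nonneg (by positivity)]
      refine mul_le_mul_of_nonneg_left ?_ (by positivity)
      exact inv_anti₀ (by positivity) (by nlinarith [hz'.1])
    have hiφ2 : IntegrableOn (fun z : ℂ => Sh.indicator (fun y => 3 * ‖y‖⁻¹) z) B2 ν := by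
      refine integrableOn_bdd (measurableSet_annulus _ _) (annulus_subset _ _)
        ((measurable_norm.inv.const_mul 3).indicator (measurableSet_annulus _ _))
        (M := 3 * R1⁻¹) ?_
      intro z hz
      have hz' : R1 < ‖z‖ ∧ ‖z‖ ≤ r + K := hz
      by_cases hzS : z ∈ Sh
      · rw [Set.indicator_of_mem hzS, abs_of_nonneg (by positivity)]
        refine mul_le_mul_of_nonneg_left ?_ (by norm_num)
        exact inv_anti₀ hR1pos hz'.1.le
      · rw [Set.indicator_of_notMem hzS, abs_zero]; positivity
    have hpt : ∀ z ∈ B2, |g z - g (z + w)|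
        ≤ 2*K*(‖z‖^2)⁻¹ + Sh.indicator (fun y => 3 * ‖y‖⁻¹) z := by
      intro z hz
      have hz' : R1 < ‖z‖ ∧ ‖z‖ ≤ r + K := hz
      obtain ⟨hz1, hz2⟩ := hz'
      have hzpos : 0 < ‖z‖ := lt_trans hR1pos hz1
      have hz0 : z ≠ 0 := norm_pos_iff.1 hzpos
      have hzw_lb : ‖z‖ - K ≤ ‖z + w‖ := by
        have h := norm_add_le (z+w) (-w)
        rw [add_neg_cancel_right, norm_neg] at h
        linarith
      have hzw_ub : ‖z + w‖ ≤ ‖z‖ + K := norm_add_le z w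
      have hKz : 2*K ≤ ‖z‖ := by linarith
      have hhalf : ‖z‖/2 ≤ ‖z + w‖ := by linarith
      have hzwpos : 0 < ‖z + w‖ := by linarith
      have hzw0 : z + w ≠ 0 := norm_pos_iff.1 hzwpos
      have hr0z : r0 < ‖z‖ := by linarith
      have hr0zw : r0 < ‖z + w‖ := by linarith
      have hind : 0 ≤ Sh.indicator (fun y => 3 * ‖y‖⁻¹) z :=
        Set.indicator_nonneg (fun y _ => by positivity) z
      have ht1 : (0:ℝ) ≤ 2*K*(‖z‖^2)⁻¹ := by positivity
      by_cases hA1 : z ∈ A <;> by_cases hA2 : z + w ∈ A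
      · rw [hgdef, Set.indicator_of_mem hA1, Set.indicator_of_mem hA2]
        have hcalc : (1:ℂ)/z - 1/(z+w) = w/(z*(z+w)) := by
          field_simp
          ring
        have hnorm : ‖(1:ℂ)/z - 1/(z+w)‖ = K / (‖z‖ * ‖z+w‖) := by
          rw [hcalc, norm_div, norm_mul]
        have hle : K / (‖z‖ * ‖z+w‖) ≤ 2*K*(‖z‖^2)⁻¹ := by
          have hden : ‖z‖^2/2 ≤ ‖z‖*‖z+w‖ := by nlinarith
          have h1 : K / (‖z‖ * ‖z+w‖) ≤ K / (‖z‖^2/2) :=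
            div_le_div_of_nonneg_left hK0 (by positivity) hden
          have hx : (‖z‖:ℝ)^2 ≠ 0 := by positivity
          have h2 : K / (‖z‖^2/2) = 2*K*(‖z‖^2)⁻¹ := by
            field_simp
          linarith [h2 ▸ h1]
        calc |f z - f (z+w)| ≤ ‖(1:ℂ)/z - 1/(z+w)‖ := hlip z (z+w)
          _ = K / (‖z‖ * ‖z+w‖) := hnorm
          _ ≤ 2*K*(‖z‖^2)⁻¹ := hle
          _ ≤ _ := le_add_of_nonneg_right hind
      · rw [hgdef, Set.indicator_of_mem hA1, Set.indicator_of_notMem hA2, sub_zero]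
        have hA1' : r0 < ‖z‖ ∧ ‖z‖ ≤ r := hA1
        have hrlt : r < ‖z + w‖ := by
          by_contra hcon
          push_neg at hcon
          exact hA2 ⟨hr0zw, hcon⟩
        have hSh : z ∈ Sh := ⟨by linarith, by linarith [hA1'.2]⟩
        calc |f z| ≤ ‖z‖⁻¹ := hb z
          _ ≤ 3 * ‖z‖⁻¹ := by nlinarith [inv_nonneg.2 hzpos.le]
          _ = Sh.indicator (fun y => 3 * ‖y‖⁻¹) z := (Set.indicator_of_mem hSh (fun y => 3 * ‖y‖⁻¹)).symm
          _ ≤ _ := le_add_of_nonneg_left ht1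
      · rw [hgdef, Set.indicator_of_notMem hA1, Set.indicator_of_mem hA2, zero_sub, abs_neg]
        have hA2' : r0 < ‖z + w‖ ∧ ‖z + w‖ ≤ r := hA2
        have hrlt : r < ‖z‖ := by
          by_contra hcon
          push_neg at hcon
          exact hA1 ⟨hr0z, hcon⟩
        have hSh : z ∈ Sh := ⟨by linarith, by linarith [hA2'.2, hzw_lb]⟩
        calc |f (z+w)| ≤ ‖z+w‖⁻¹ := hb _
          _ ≤ (‖z‖/2)⁻¹ := inv_anti₀ (by positivity) hhalf
          _ = 2 * ‖z‖⁻¹ := by rw [inv_div]; rw [div_eq_mul_inv]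
          _ ≤ 3 * ‖z‖⁻¹ := by nlinarith [inv_nonneg.2 hzpos.le]
          _ = Sh.indicator (fun y => 3 * ‖y‖⁻¹) z := (Set.indicator_of_mem hSh (fun y => 3 * ‖y‖⁻¹)).symm
          _ ≤ _ := le_add_of_nonneg_left ht1
      · rw [hgdef, Set.indicator_of_notMem hA1, Set.indicator_of_notMem hA2,
          sub_zero, abs_zero]
        exact add_nonneg ht1 hind
    have hiFB2 : IntegrableOn (fun z => g z - g (z + w)) B2 ν := hiF.mono_set hB2sub'
    have hφint : IntegrableOn
        (fun z : ℂ => 2*K*(‖z‖^2)⁻¹ + Sh.indicator (fun y => 3 * ‖y‖⁻¹) z) B2 ν :=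
      hiφ1.add hiφ2
    have hmono2 : ∫ z in B2, |g z - g (z + w)| ∂ν
        ≤ ∫ z in B2, (2*K*(‖z‖^2)⁻¹ + Sh.indicator (fun y => 3 * ‖y‖⁻¹) z) ∂ν :=
      setIntegral_mono_on hiFB2.abs hφint (measurableSet_annulus _ _) hpt
    have habs2 : |∫ z in B2, (g z - g (z + w)) ∂ν| ≤ ∫ z in B2, |g z - g (z + w)| ∂ν := by
      simpa [Real.norm_eq_abs] using
        norm_integral_le_integral_norm (μ := ν.restrict B2) (fun z => g z - g (z + w))
    have hadd : ∫ z in B2, (2*K*(‖z‖^2)⁻¹ + Sh.indicator (fun y => 3 * ‖y‖⁻¹) z) ∂ν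
        = (∫ z in B2, 2*K*(‖z‖^2)⁻¹ ∂ν)
          + ∫ z in B2, Sh.indicator (fun y => 3 * ‖y‖⁻¹) z ∂ν :=
      integral_add hiφ1 hiφ2
    have hfirst : (∫ z in B2, 2*K*(‖z‖^2)⁻¹ ∂ν) ≤ 2*K*(4*C0) := by
      rw [hB2def, integral_const_mul]
      have htail := tail_bound hR1_1 (fun t ht => hd t (by linarith)) (r+K)
      exact mul_le_mul_of_nonneg_left htail (by positivity)
    have hsecond : (∫ z in B2, Sh.indicator (fun y => 3 * ‖y‖⁻¹) z ∂ν) ≤ 6*C0 := by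
      rw [setIntegral_indicator (measurableSet_annulus _ _)]
      have hsub3 : B2 ∩ Sh ⊆ Metric.closedBall 0 (r+K) :=
        Set.inter_subset_left.trans (annulus_subset _ _)
      have hfin3 : ν (B2 ∩ Sh) ≠ ⊤ := meas_ne_top_of_subset_ball hsub3
      have hmono3 : ∫ z in B2 ∩ Sh, 3 * ‖z‖⁻¹ ∂ν ≤ ∫ _ in B2 ∩ Sh, 3 * (r-K)⁻¹ ∂ν := by
        refine setIntegral_mono_on ?_ (integrableOn_const hfin3)
          ((measurableSet_annulus _ _).inter (measurableSet_annulus _ _)) ?_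
        · refine integrableOn_bdd
            ((measurableSet_annulus _ _).inter (measurableSet_annulus _ _))
            hsub3 (measurable_norm.inv.const_mul 3) (M := 3 * R1⁻¹) ?_
          intro z hz
          have hz1 : R1 < ‖z‖ ∧ ‖z‖ ≤ r + K := hz.1
          rw [abs_of_nonneg (by positivity)]
          exact mul_le_mul_of_nonneg_left (inv_anti₀ hR1pos hz1.1.le) (by norm_num)
        · intro z hz
          have hzS : r - K < ‖z‖ ∧ ‖z‖ ≤ r + K := hz.2
          exact mul_le_mul_of_nonneg_left (inv_anti₀ hrKpos hzS.1.le) (by norm_num)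
      rw [setIntegral_const, smul_eq_mul] at hmono3
      have hmeas3 : (ν (B2 ∩ Sh)).toReal ≤ C0 * (r+K) :=
        le_trans (ENNReal.toReal_mono (meas_ne_top_of_subset_ball (Set.Subset.refl _))
          (measure_mono hsub3)) (hd (r+K) (by linarith))
      have h2 : (r+K)/(r-K) ≤ 2 := (div_le_iff₀ hrKpos).2 (by linarith)
      calc ∫ z in B2 ∩ Sh, 3 * ‖z‖⁻¹ ∂ν
          ≤ (ν (B2 ∩ Sh)).toReal * (3 * (r-K)⁻¹) := hmono3
        _ ≤ (C0 * (r+K)) * (3 * (r-K)⁻¹) := mul_le_mul_of_nonneg_right hmeas3 (by positivity)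
        _ = 3*C0*((r+K)/(r-K)) := by rw [div_eq_mul_inv]; ring
        _ ≤ 3*C0*2 := mul_le_mul_of_nonneg_left h2 (by positivity)
        _ = 6*C0 := by ring
    have hp2 : |∫ z in B2, (g z - g (z + w)) ∂ν| ≤ 2*K*(4*C0) + 6*C0 :=
      habs2.trans (hmono2.trans (by rw [hadd]; exact add_le_add hfirst hsecond))
    rw [hsplit]
    refine le_trans (le_trans (abs_add_le _ _) (add_le_add hp1 hp2)) (le_max_right _ _)

end Stmt9Aux

namespace Stmt9Aux

lemma hbP : ∀ z : ℂ, |max (1/z).re 0| ≤ ‖z‖⁻¹ := by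
  intro z
  have h1 : |max (1/z).re 0| ≤ |(1/z).re| := by
    simpa using abs_max_sub_max_le_abs (1/z).re 0 0
  have h2 : |(1/z).re| ≤ ‖(1:ℂ)/z‖ := by
    simpa using Complex.abs_re_le_norm (1/z)
  have h3 : ‖(1:ℂ)/z‖ = ‖z‖⁻¹ := by rw [norm_div, norm_one, one_div]
  linarith [h3 ▸ h2]

lemma hbM : ∀ z : ℂ, |max (-(1/z).re) 0| ≤ ‖z‖⁻¹ := by
  intro z
  have h1 : |max (-(1/z).re) 0| ≤ |-(1/z).re| := by
    simpa using abs_max_sub_max_le_abs (-(1/z).re) 0 0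
  rw [abs_neg] at h1
  have h2 : |(1/z).re| ≤ ‖(1:ℂ)/z‖ := by
    simpa using Complex.abs_re_le_norm (1/z)
  have h3 : ‖(1:ℂ)/z‖ = ‖z‖⁻¹ := by rw [norm_div, norm_one, one_div]
  linarith [h3 ▸ h2]

lemma hlipP : ∀ z z' : ℂ, |max (1/z).re 0 - max (1/z').re 0| ≤ ‖1/z - 1/z'‖ := by
  intro z z'
  refine (abs_max_sub_max_le_abs (1/z).re (1/z').re 0).trans ?_
  have : (1/z).re - (1/z').re = ((1/z : ℂ) - 1/z').re := by rw [Complex.sub_re]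
  rw [this]
  simpa using Complex.abs_re_le_norm ((1/z : ℂ) - 1/z')

lemma hlipM : ∀ z z' : ℂ, |max (-(1/z).re) 0 - max (-(1/z').re) 0| ≤ ‖1/z - 1/z'‖ := by
  intro z z'
  refine (abs_max_sub_max_le_abs (-(1/z).re) (-(1/z').re) 0).trans ?_
  have h : -(1/z).re - -(1/z').re = -(((1/z : ℂ) - 1/z').re) := by
    rw [Complex.sub_re]; ring
  rw [h, abs_neg]
  simpa using Complex.abs_re_le_norm ((1/z : ℂ) - 1/z')

lemma measP : Measurable (fun z : ℂ => max (1/z).re 0) :=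
  (Complex.measurable_re.comp (measurable_const.div measurable_id)).max measurable_const

lemma measM : Measurable (fun z : ℂ => max (-(1/z).re) 0) :=
  (Complex.measurable_re.comp (measurable_const.div measurable_id)).neg.max measurable_const

end Stmt9Aux

/-- For a signed measure `ν = νp - νm` of finite upper density and
`w ∈ ℂ`, the right and left logarithmic functions of `ν - ν_{→w}` over the
annuli `{r₀ < |z| ≤ r}` remain uniformly bounded in `r ≥ r₀`. Here
`ν_{→w} = (map (·+w) νp) - (map (·+w) νm)`, so that
`ν - ν_{→w} = (νp + map (·+w) νm) - (νm + map (·+w) νp)`. -/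
theorem stmt9 (νp νm : Measure ℂ)
    [IsFiniteMeasureOnCompacts νp] [IsFiniteMeasureOnCompacts νm]
    (hp : FiniteUpperDensity νp) (hm : FiniteUpperDensity νm) (w : ℂ) :
    ∀ r0 : ℝ, 0 < r0 → ∃ C : ℝ, ∀ r ≥ r0,
      |(ellP νp r0 r + ellP (Measure.map (· + w) νm) r0 r) -
        (ellP νm r0 r + ellP (Measure.map (· + w) νp) r0 r)| +
      |(ellM νp r0 r + ellM (Measure.map (· + w) νm) r0 r) -
        (ellM νm r0 r + ellM (Measure.map (· + w) νp) r0 r)| ≤ C := by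
  intro r0 hr0
  obtain ⟨C1, h1⟩ := Stmt9Aux.key hp w _ Stmt9Aux.measP Stmt9Aux.hbP Stmt9Aux.hlipP hr0
  obtain ⟨C2, h2⟩ := Stmt9Aux.key hm w _ Stmt9Aux.measP Stmt9Aux.hbP Stmt9Aux.hlipP hr0
  obtain ⟨C3, h3⟩ := Stmt9Aux.key hp w _ Stmt9Aux.measM Stmt9Aux.hbM Stmt9Aux.hlipM hr0
  obtain ⟨C4, h4⟩ := Stmt9Aux.key hm w _ Stmt9Aux.measM Stmt9Aux.hbM Stmt9Aux.hlipM hr0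
  refine ⟨(C1 + C2) + (C3 + C4), ?_⟩
  intro r hr
  have k1 : |ellP νp r0 r - ellP (Measure.map (· + w) νp) r0 r| ≤ C1 := h1 r hr
  have k2 : |ellP νm r0 r - ellP (Measure.map (· + w) νm) r0 r| ≤ C2 := h2 r hr
  have k3 : |ellM νp r0 r - ellM (Measure.map (· + w) νp) r0 r| ≤ C3 := h3 r hr
  have k4 : |ellM νm r0 r - ellM (Measure.map (· + w) νm) r0 r| ≤ C4 := h4 r hr
  obtain ⟨a1, b1⟩ := abs_le.1 k1
  obtain ⟨a2, b2⟩ := abs_le.1 k2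
  obtain ⟨a3, b3⟩ := abs_le.1 k3
  obtain ⟨a4, b4⟩ := abs_le.1 k4
  have e1 : |(ellP νp r0 r + ellP (Measure.map (· + w) νm) r0 r) -
      (ellP νm r0 r + ellP (Measure.map (· + w) νp) r0 r)| ≤ C1 + C2 := by
    rw [abs_le]; constructor <;> linarith
  have e2 : |(ellM νp r0 r + ellM (Measure.map (· + w) νm) r0 r) -
      (ellM νm r0 r + ellM (Measure.map (· + w) νp) r0 r)| ≤ C3 + C4 := by
    rw [abs_le]; constructor <;> linarith
  linarith
end
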